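/- Let n ≥ 1 and let θ be a real number with 0 < θ < 1/(2n+1). Let (a_k)_{k∈ℕ} be a sequence of positive reals satisfying a_{k+1} ≤ θ·a_k for all k. Then the map h from the set of sequences u : ℕ → {-n,...,n} to ℝ defined by h(u) = Σ_k a_k·u_k is well-defined (the series converges) and injective. -/

import Mathlib

/-- For `n ≥ 1`, `0 < θ < 1/(2n+1)`, and a positive sequence `a` with
`a (k+1) ≤ θ * a k`, the map `u ↦ ∑ k, a k * u k`, defined on sequences
`u : ℕ → ℤ` with `|u k| ≤ n`, is well-defined (the series converges) and injective. -/
theorem cantor_injective (n : ℕ) (hn : 1 ≤ n) (θ : ℝ) (hθ0 : 0 < θ)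
    (hθ : θ < 1 / (2 * n + 1))
    (a : ℕ → ℝ) (ha : ∀ k, 0 < a k) (hd : ∀ k, a (k + 1) ≤ θ * a k) :
    (∀ u : ℕ → ℤ, (∀ k, |u k| ≤ (n : ℤ)) → Summable (fun k => a k * (u k : ℝ))) ∧
    (∀ u v : ℕ → ℤ, (∀ k, |u k| ≤ (n : ℤ)) → (∀ k, |v k| ≤ (n : ℤ)) →
      (∑' k, a k * (u k : ℝ)) = (∑' k, a k * (v k : ℝ)) → u = v) := by
  have hn1 : (1:ℝ) ≤ n := by exact_mod_cast hn
  have hθ1 : θ < 1 := lt_of_lt_of_le hθ (by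
    rw [div_le_one (by positivity)]; linarith)
  have ha_le : ∀ m j, a (m + j) ≤ θ ^ j * a m := by
    intro m j
    induction j with
    | zero => simp
    | succ j ih =>
      calc a (m + (j+1)) = a ((m + j) + 1) := by ring_nf
        _ ≤ θ * a (m + j) := hd _
        _ ≤ θ * (θ ^ j * a m) := mul_le_mul_of_nonneg_left ih hθ0.le
        _ = θ ^ (j+1) * a m := by ring
  have hgeo : Summable (fun j : ℕ => θ ^ j) := summable_geometric_of_lt_one hθ0.le hθ1
  have hsum_tail : ∀ m, Summable (fun j => a (m + j)) := fun m =>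
    Summable.of_nonneg_of_le (fun j => (ha _).le) (fun j => ha_le m j)
      (hgeo.mul_right (a m))
  have hsum_a : Summable a := by simpa using hsum_tail 0
  have hS : ∀ u : ℕ → ℤ, (∀ k, |u k| ≤ (n : ℤ)) → Summable (fun k => a k * (u k : ℝ)) := by
    intro u hu
    apply Summable.of_norm_bounded (g := fun k => a k * n) (hsum_a.mul_right (n:ℝ))
    intro k
    rw [Real.norm_eq_abs, abs_mul, abs_of_pos (ha k)]
    have : |(u k : ℝ)| ≤ n := by exact_mod_cast hu k
    exact mul_le_mul_of_nonneg_left this (ha k).le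
  refine ⟨hS, ?_⟩
  intro u v hu hv heq
  by_contra hne
  have hex : ∃ k, u k ≠ v k := by
    by_contra h; push_neg at h; exact hne (funext h)
  classical
  set m := Nat.find hex with hm_def
  have hm : u m ≠ v m := Nat.find_spec hex
  have hlt : ∀ k < m, u k = v k := fun k hk => by
    have := Nat.find_min hex hk; simpa using this
  set f : ℕ → ℝ := fun k => a k * ((u k - v k : ℤ) : ℝ) with hf
  have hf_eq : ∀ k, f k = a k * (u k : ℝ) - a k * (v k : ℝ) := by
    intro k; simp only [hf]; push_cast; ring
  have hsf : Summable f := by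
    have h := (hS u hu).sub (hS v hv)
    apply h.congr
    intro k; exact (hf_eq k).symm
  have htsum0 : ∑' k, f k = 0 := by
    have h1 : ∑' k, f k = (∑' k, a k * (u k : ℝ)) - ∑' k, a k * (v k : ℝ) := by
      rw [← Summable.tsum_sub (hS u hu) (hS v hv)]
      exact tsum_congr hf_eq
    rw [h1, heq, sub_self]
  have hsplit := Summable.sum_add_tsum_nat_add m hsf
  have hpre : ∑ k ∈ Finset.range m, f k = 0 := by
    apply Finset.sum_eq_zero
    intro k hk
    have hk' := hlt k (Finset.mem_range.mp hk)
    simp [hf, hk']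
  have htail0 : ∑' j, f (j + m) = 0 := by
    have := hsplit
    rw [hpre, zero_add, htsum0] at this
    exact this
  have hsft : Summable (fun j => f (j + m)) := (summable_nat_add_iff m).mpr hsf
  have hzero_add := Summable.tsum_eq_zero_add hsft
  simp only [zero_add] at hzero_add
  rw [htail0] at hzero_add
  have hfm : f m = - ∑' j, f (j + 1 + m) := by linarith [hzero_add]
  -- bound the tail
  have hbound : ∀ j : ℕ, ‖f (j + 1 + m)‖ ≤ (2 * n * a m * θ) * θ ^ j := by
    intro j
    have h1 : a (j + 1 + m) ≤ θ ^ (j + 1) * a m := by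
      have := ha_le m (j + 1)
      calc a (j + 1 + m) = a (m + (j + 1)) := by ring_nf
        _ ≤ θ ^ (j + 1) * a m := this
    have h2 : |((u (j+1+m) - v (j+1+m) : ℤ) : ℝ)| ≤ 2 * n := by
      have := abs_sub (u (j+1+m)) (v (j+1+m))
      have h3 : |u (j+1+m) - v (j+1+m)| ≤ 2 * n := by
        have := abs_sub_abs_le_abs_sub (u (j+1+m)) (v (j+1+m))
        have hA := hu (j+1+m); have hB := hv (j+1+m)
        have := abs_sub_le (u (j+1+m)) 0 (v (j+1+m))
        simp only [sub_zero, zero_sub, abs_neg] at this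
        omega
      exact_mod_cast h3
    rw [Real.norm_eq_abs, abs_mul, abs_of_pos (ha _)]
    calc a (j+1+m) * |((u (j+1+m) - v (j+1+m) : ℤ) : ℝ)|
        ≤ (θ ^ (j+1) * a m) * (2 * n) := by
          exact mul_le_mul h1 h2 (abs_nonneg _) (mul_nonneg (pow_nonneg hθ0.le _) (ha m).le)
      _ = (2 * n * a m * θ) * θ ^ j := by ring
  have hsg : Summable (fun j : ℕ => (2 * n * a m * θ) * θ ^ j) := hgeo.mul_left _
  have htail_le : ‖∑' j, f (j + 1 + m)‖ ≤ (2 * n * a m * θ) * (1 - θ)⁻¹ := by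
    calc ‖∑' j, f (j + 1 + m)‖ ≤ ∑' j, (2 * n * a m * θ) * θ ^ j :=
          tsum_of_norm_bounded hsg.hasSum hbound
      _ = (2 * n * a m * θ) * (1 - θ)⁻¹ := by
          rw [tsum_mul_left, tsum_geometric_of_lt_one hθ0.le hθ1]
  have hfm_lb : a m ≤ |f m| := by
    have hw : (1:ℤ) ≤ |u m - v m| := Int.one_le_abs (sub_ne_zero.mpr hm)
    have hw' : (1:ℝ) ≤ |((u m - v m : ℤ) : ℝ)| := by exact_mod_cast hw
    calc a m = a m * 1 := by ring
      _ ≤ a m * |((u m - v m : ℤ) : ℝ)| := by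
          exact mul_le_mul_of_nonneg_left hw' (ha m).le
      _ = |f m| := by rw [hf]; rw [abs_mul, abs_of_pos (ha m)]
  have hfinal : a m ≤ (2 * n * a m * θ) * (1 - θ)⁻¹ := by
    calc a m ≤ |f m| := hfm_lb
      _ = ‖∑' j, f (j + 1 + m)‖ := by rw [hfm, Real.norm_eq_abs, abs_neg]
      _ ≤ (2 * n * a m * θ) * (1 - θ)⁻¹ := htail_le
  have h1θ : (0:ℝ) < 1 - θ := by linarith
  have hme : (0:ℝ) < a m := ha m
  have h2 : a m * (1 - θ) ≤ 2 * n * a m * θ := by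
    have h := mul_le_mul_of_nonneg_right hfinal h1θ.le
    rw [mul_assoc, inv_mul_cancel₀ h1θ.ne', mul_one] at h
    linarith
  have h3 : θ * (2 * (n:ℝ) + 1) < 1 := (lt_div_iff₀ (by positivity)).mp hθ
  nlinarith
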